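/- Let V be a finite set and let M be an independence model over V satisfying CI0, CI1 and CI3. Then the set e(M) of elementary triplets derived from M satisfies ci3: for all distinct i,j,k ∈ V and L ⊆ V∖{i,j,k}, if i⊥j|L ∈ e(M) and i⊥k|L ∈ e(M), then i⊥j|{k}∪L ∈ e(M) and i⊥k|{j}∪L ∈ e(M). -/
import Mathlib


variable {V : Type*} [DecidableEq V]

/-- CI0 (symmetry): for all pairwise disjoint `I J K`, `I ⊥ J | K ∈ M ↔ J ⊥ I | K ∈ M`. -/
def CI0 (M : Set (Finset V × Finset V × Finset V)) : Prop :=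
  ∀ I J K : Finset V, Disjoint I J → Disjoint I K → Disjoint J K →
    ((I, J, K) ∈ M ↔ (J, I, K) ∈ M)

/-- CI1: for all pairwise disjoint `I J K L`,
`(I ⊥ J | K ∪ L ∈ M and I ⊥ K | L ∈ M) ↔ I ⊥ J ∪ K | L ∈ M`. -/
def CI1 (M : Set (Finset V × Finset V × Finset V)) : Prop :=
  ∀ I J K L : Finset V, Disjoint I J → Disjoint I K → Disjoint I L →
    Disjoint J K → Disjoint J L → Disjoint K L →
    (((I, J, K ∪ L) ∈ M ∧ (I, K, L) ∈ M) ↔ (I, J ∪ K, L) ∈ M)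

/-- CI3 (composition): for all pairwise disjoint `I J K L`,
`(I ⊥ J | L ∈ M and I ⊥ K | L ∈ M) → (I ⊥ J | K ∪ L ∈ M and I ⊥ K | J ∪ L ∈ M)`. -/
def CI3 (M : Set (Finset V × Finset V × Finset V)) : Prop :=
  ∀ I J K L : Finset V, Disjoint I J → Disjoint I K → Disjoint I L →
    Disjoint J K → Disjoint J L → Disjoint K L →
    ((I, J, L) ∈ M ∧ (I, K, L) ∈ M) → ((I, J, K ∪ L) ∈ M ∧ (I, K, J ∪ L) ∈ M)

/-- ci3: for all distinct `i j k` and `L ⊆ V \ {i, j, k}`,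
`(i ⊥ j | L ∈ E and i ⊥ k | L ∈ E) → (i ⊥ j | {k} ∪ L ∈ E and i ⊥ k | {j} ∪ L ∈ E)`. -/
def ci3 (E : Set (V × V × Finset V)) : Prop :=
  ∀ (i j k : V) (L : Finset V), i ≠ j → i ≠ k → j ≠ k → i ∉ L → j ∉ L → k ∉ L →
    ((i, j, L) ∈ E ∧ (i, k, L) ∈ E) →
      ((i, j, insert k L) ∈ E ∧ (i, k, insert j L) ∈ E)

/-- `e(M)`: the elementary triplets `i ⊥ j | M'` such that there is `I ⊥ J | K ∈ M` with
`i ∈ I`, `j ∈ J` and `K ⊆ M' ⊆ (I \ {i}) ∪ (J \ {j}) ∪ K`. -/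
def eMap (M : Set (Finset V × Finset V × Finset V)) : Set (V × V × Finset V) :=
  { T | ∃ I J K : Finset V, (I, J, K) ∈ M ∧ T.1 ∈ I ∧ T.2.1 ∈ J ∧
      K ⊆ T.2.2 ∧ T.2.2 ⊆ I.erase T.1 ∪ J.erase T.2.1 ∪ K }

lemma singleton_of_eMap (M : Set (Finset V × Finset V × Finset V))
    (hM : ∀ T ∈ M, Disjoint T.1 T.2.1 ∧ Disjoint T.1 T.2.2 ∧ Disjoint T.2.1 T.2.2)
    (h0 : CI0 M) (h1 : CI1 M) {i j : V} {M' : Finset V} (h : (i, j, M') ∈ eMap M) :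
    ({i}, {j}, M') ∈ M := by
  obtain ⟨I, J, K, hm, hiI, hjJ, hKM, hMsub⟩ := h
  obtain ⟨hIJ, hIK, hJK⟩ := hM _ hm
  simp only at hIJ hIK hJK hiI hjJ hKM hMsub ⊢
  set A : Finset V := M' ∩ I.erase i with hA
  set B : Finset V := M' ∩ J.erase j with hB
  have hAIe : A ⊆ I.erase i := Finset.inter_subset_right
  have hBJe : B ⊆ J.erase j := Finset.inter_subset_right
  have hAI : A ⊆ I := hAIe.trans (Finset.erase_subset _ _)
  have hBJ : B ⊆ J := hBJe.trans (Finset.erase_subset _ _)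
  have hiA : i ∉ A := fun hx => (Finset.notMem_erase i I) (hAIe hx)
  have hjB : j ∉ B := fun hx => (Finset.notMem_erase j J) (hBJe hx)
  have hiAI : insert i A ⊆ I := Finset.insert_subset hiI hAI
  have hjBJ : insert j B ⊆ J := Finset.insert_subset hjJ hBJ
  set R : Finset V := I \ insert i A with hR
  set S : Finset V := J \ insert j B with hS
  have hRI : R ⊆ I := Finset.sdiff_subset
  have hSJ : S ⊆ J := Finset.sdiff_subset
  have hRunion : R ∪ insert i A = I := Finset.sdiff_union_of_subset hiAI
  have hSunion : S ∪ insert j B = J := Finset.sdiff_union_of_subset hjBJ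
  -- step 0: symmetry
  have s0 : (J, I, K) ∈ M := (h0 I J K hIJ hIK hJK).mp hm
  -- step 1: drop R
  have s1 : (J, insert i A, K) ∈ M := by
    have := (h1 J R (insert i A) K (Disjoint.mono_right hRI hIJ.symm)
      (Disjoint.mono_right hiAI hIJ.symm) hJK (Finset.sdiff_disjoint)
      (Disjoint.mono_left hRI hIK) (Disjoint.mono_left hiAI hIK)).mpr (by rwa [hRunion])
    exact this.2
  -- step 2: weak union, move A into conditioning
  have s2 : (J, {i}, A ∪ K) ∈ M := by
    have hins : insert i A = {i} ∪ A := Finset.insert_eq i A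
    have := (h1 J {i} A K (Disjoint.mono_right (by simpa using hiI) hIJ.symm)
      (Disjoint.mono_right hAI hIJ.symm) hJK
      (Finset.disjoint_singleton_left.mpr hiA)
      (Disjoint.mono_left (by simpa using hiI) hIK) (Disjoint.mono_left hAI hIK)).mpr
      (by rwa [hins] at s1)
    exact this.1
  have hiAK : Disjoint ({i} : Finset V) (A ∪ K) :=
    Finset.disjoint_union_right.mpr ⟨Finset.disjoint_singleton_left.mpr hiA,
      Disjoint.mono_left (by simpa using hiI) hIK⟩
  have s3 : ({i}, J, A ∪ K) ∈ M :=
    (h0 J {i} (A ∪ K) (Disjoint.mono_right (by simpa using hiI) hIJ.symm)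
      (Finset.disjoint_union_right.mpr ⟨Disjoint.mono_right hAI hIJ.symm, hJK⟩) hiAK).mp s2
  have hiJ : Disjoint ({i} : Finset V) J := Disjoint.mono_left (by simpa using hiI : ({i}:Finset V) ⊆ I) hIJ
  have hJAK : Disjoint J (A ∪ K) :=
    Finset.disjoint_union_right.mpr ⟨(Disjoint.mono_left hAI hIJ).symm, hJK⟩
  -- step 4: drop S
  have s4 : ({i}, insert j B, A ∪ K) ∈ M := by
    have := (h1 {i} S (insert j B) (A ∪ K) (Disjoint.mono_right hSJ hiJ)
      (Disjoint.mono_right hjBJ hiJ) hiAK Finset.sdiff_disjoint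
      (Disjoint.mono_left hSJ hJAK) (Disjoint.mono_left hjBJ hJAK)).mpr (by rwa [hSunion])
    exact this.2
  -- step 5: weak union, move B into conditioning
  have s5 : ({i}, {j}, B ∪ (A ∪ K)) ∈ M := by
    have hins : insert j B = {j} ∪ B := Finset.insert_eq j B
    have := (h1 {i} {j} B (A ∪ K) (Disjoint.mono_right (by simpa using hjJ) hiJ)
      (Disjoint.mono_right hBJ hiJ) hiAK
      (Finset.disjoint_singleton_left.mpr hjB)
      (Disjoint.mono_left (by simpa using hjJ) hJAK) (Disjoint.mono_left hBJ hJAK)).mpr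
      (by rwa [hins] at s4)
    exact this.1
  have hEq : B ∪ (A ∪ K) = M' := by
    apply Finset.Subset.antisymm
    · exact Finset.union_subset Finset.inter_subset_left
        (Finset.union_subset Finset.inter_subset_left hKM)
    · intro x hx
      rcases Finset.mem_union.mp (hMsub hx) with h' | h'
      · rcases Finset.mem_union.mp h' with h'' | h''
        · exact Finset.mem_union.mpr (.inr (Finset.mem_union.mpr (.inl
            (Finset.mem_inter.mpr ⟨hx, h''⟩))))
        · exact Finset.mem_union.mpr (.inl (Finset.mem_inter.mpr ⟨hx, h''⟩))
      · exact Finset.mem_union.mpr (.inr (Finset.mem_union.mpr (.inr h')))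
  rwa [hEq] at s5

/-- If an independence model `M` over a finite set `V` satisfies CI0, CI1
and CI3, then `e(M)` satisfies ci3. -/
theorem eMap_ci3_of_CI013 [Fintype V] (M : Set (Finset V × Finset V × Finset V))
    (hM : ∀ T ∈ M, Disjoint T.1 T.2.1 ∧ Disjoint T.1 T.2.2 ∧ Disjoint T.2.1 T.2.2)
    (h0 : CI0 M) (h1 : CI1 M) (h3 : CI3 M) :
    ci3 (eMap M) := by
  intro i j k L hij hik hjk hiL hjL hkL h
  have hj : ({i}, {j}, L) ∈ M := singleton_of_eMap M hM h0 h1 h.1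
  have hk : ({i}, {k}, L) ∈ M := singleton_of_eMap M hM h0 h1 h.2
  have dij : Disjoint ({i} : Finset V) {j} := Finset.disjoint_singleton.mpr hij
  have dik : Disjoint ({i} : Finset V) {k} := Finset.disjoint_singleton.mpr hik
  have djk : Disjoint ({j} : Finset V) {k} := Finset.disjoint_singleton.mpr hjk
  have diL : Disjoint ({i} : Finset V) L := Finset.disjoint_singleton_left.mpr hiL
  have djL : Disjoint ({j} : Finset V) L := Finset.disjoint_singleton_left.mpr hjL
  have dkL : Disjoint ({k} : Finset V) L := Finset.disjoint_singleton_left.mpr hkL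
  obtain ⟨r1, r2⟩ := h3 {i} {j} {k} L dij dik diL djk djL dkL ⟨hj, hk⟩
  constructor
  · exact ⟨{i}, {j}, insert k L, by rwa [Finset.insert_eq],
      Finset.mem_singleton_self i, Finset.mem_singleton_self j, subset_rfl,
      fun x hx => Finset.mem_union_right _ hx⟩
  · exact ⟨{i}, {k}, insert j L, by rwa [Finset.insert_eq],
      Finset.mem_singleton_self i, Finset.mem_singleton_self k, subset_rfl,
      fun x hx => Finset.mem_union_right _ hx⟩
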